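/- Let A satisfy A𝟏 = 0 and Ax = e_R − e_L, with Ā invertible and G₂ as above. Then A G₂ 𝟏 = 𝟏 − ((n+1)/2) e_L − ((n+1)/2) e_R, and consequently (1/(n+1)) A G₂ 𝟏 + (1/2) A x = 𝟏/(n+1) − e_L. -/

import Mathlib

open Matrix

noncomputable section

def onesVec (n : ℕ) : Fin (n+1) → ℝ := fun _ => 1

def gridVec (n : ℕ) : Fin (n+1) → ℝ := fun i => (i : ℝ) / n

def eL (n : ℕ) : Fin (n+1) → ℝ := fun i => if i.1 = 0 then 1 else 0

def eR (n : ℕ) : Fin (n+1) → ℝ := fun i => if i.1 = n then 1 else 0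

def interiorEmb (n : ℕ) : Fin (n-1) → Fin (n+1) :=
  fun i => ⟨i.1 + 1, by have := i.isLt; omega⟩

def centralBlock (n : ℕ) (A : Matrix (Fin (n+1)) (Fin (n+1)) ℝ) :
    Matrix (Fin (n-1)) (Fin (n-1)) ℝ :=
  A.submatrix (interiorEmb n) (interiorEmb n)

def pad (n : ℕ) (B : Matrix (Fin (n-1)) (Fin (n-1)) ℝ) :
    Matrix (Fin (n+1)) (Fin (n+1)) ℝ :=
  fun i j =>
    if hi : 0 < i.1 ∧ i.1 < n then
      if hj : 0 < j.1 ∧ j.1 < n then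
        B ⟨i.1 - 1, by omega⟩ ⟨j.1 - 1, by omega⟩
      else 0
    else 0

def G2 (n : ℕ) (A : Matrix (Fin (n+1)) (Fin (n+1)) ℝ) :
    Matrix (Fin (n+1)) (Fin (n+1)) ℝ :=
  pad n (centralBlock n A)⁻¹

def Aplus (n : ℕ) (A : Matrix (Fin (n+1)) (Fin (n+1)) ℝ) :
    Matrix (Fin (n+1)) (Fin (n+1)) ℝ :=
  (1 - ((n : ℝ) + 1)⁻¹ • vecMulVec (onesVec n) (onesVec n)) * G2 n A *
      (1 - ((n : ℝ) + 1)⁻¹ • vecMulVec (onesVec n) (onesVec n)) +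
    vecMulVec (gridVec n - (1/2 : ℝ) • onesVec n)
      (gridVec n - (1/2 : ℝ) • onesVec n)

lemma interiorEmb_injective (n : ℕ) : Function.Injective (interiorEmb n) := by
  intro a b h
  simp only [interiorEmb, Fin.mk.injEq, add_left_inj] at h
  exact Fin.ext h

def intEmb (n : ℕ) : Fin (n-1) ↪ Fin (n+1) := ⟨interiorEmb n, interiorEmb_injective n⟩

lemma sum_interior (n : ℕ) (f : Fin (n+1) → ℝ)
    (hf : ∀ j : Fin (n+1), ¬(0 < j.1 ∧ j.1 < n) → f j = 0) :
    ∑ j, f j = ∑ j' : Fin (n-1), f (interiorEmb n j') := by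
  have hmap : ∑ j' : Fin (n-1), f (interiorEmb n j')
      = ∑ j ∈ Finset.univ.map (intEmb n), f j := by
    rw [Finset.sum_map]; rfl
  rw [hmap]
  symm
  apply Finset.sum_subset (Finset.subset_univ _)
  intro j _ hj
  apply hf
  intro hcon
  apply hj
  simp only [Finset.mem_map, Finset.mem_univ, true_and]
  refine ⟨⟨j.1 - 1, by omega⟩, ?_⟩
  simp only [intEmb, Function.Embedding.coeFn_mk, interiorEmb, Fin.ext_iff]
  omega

lemma sum_split (n : ℕ) (hn : 2 ≤ n) (f : Fin (n+1) → ℝ) :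
    ∑ c, f c = f ⟨0, by omega⟩ + f ⟨n, by omega⟩ + ∑ c' : Fin (n-1), f (interiorEmb n c') := by
  classical
  have hsum : ∀ c : Fin (n+1), f c =
      (if 0 < c.1 ∧ c.1 < n then f c else 0) + (if 0 < c.1 ∧ c.1 < n then 0 else f c) := by
    intro c; split <;> ring
  calc ∑ c, f c = ∑ c, ((if 0 < c.1 ∧ c.1 < n then f c else 0)
      + (if 0 < c.1 ∧ c.1 < n then 0 else f c)) := Finset.sum_congr rfl (fun c _ => hsum c)
    _ = (∑ c, if 0 < c.1 ∧ c.1 < n then f c else 0)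
      + ∑ c, (if 0 < c.1 ∧ c.1 < n then 0 else f c) := Finset.sum_add_distrib
    _ = (∑ c' : Fin (n-1), f (interiorEmb n c')) + (f ⟨0, by omega⟩ + f ⟨n, by omega⟩) := by
        congr 1
        · rw [sum_interior n _ (by intro j hj; exact if_neg hj)]
          refine Finset.sum_congr rfl (fun c' _ => ?_)
          have : 0 < (interiorEmb n c').1 ∧ (interiorEmb n c').1 < n := by
            have := c'.isLt; simp [interiorEmb]; omega
          simp [this]
        · have hpair : (Finset.univ : Finset (Fin (n+1))) =
            insert (⟨0, by omega⟩ : Fin (n+1)) (insert (⟨n, by omega⟩ : Fin (n+1))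
              ((Finset.univ : Finset (Fin (n+1))).filter (fun c => 0 < c.1 ∧ c.1 < n))) := by
            ext c
            simp only [Finset.mem_univ, Finset.mem_insert, Finset.mem_filter, true_iff, true_and,
              Fin.ext_iff]
            have := c.isLt; omega
          rw [hpair, Finset.sum_insert, Finset.sum_insert]
          · have h0 : ¬(0 < (0:ℕ) ∧ (0:ℕ) < n) := by omega
            have hn' : ¬(0 < n ∧ n < n) := by omega
            simp only [if_neg h0, if_neg hn']
            have : ∑ c ∈ (Finset.univ.filter (fun c : Fin (n+1) => 0 < c.1 ∧ c.1 < n)),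
                (if 0 < c.1 ∧ c.1 < n then 0 else f c) = 0 := by
              apply Finset.sum_eq_zero; intro c hc
              simp only [Finset.mem_filter] at hc
              simp [hc.2]
            rw [this]; ring
          · simp only [Finset.mem_filter, Fin.ext_iff]; omega
          · simp only [Finset.mem_insert, Finset.mem_filter, Fin.ext_iff]
            push_neg
            exact ⟨by omega, by intro h; omega⟩
    _ = f ⟨0, by omega⟩ + f ⟨n, by omega⟩ + ∑ c' : Fin (n-1), f (interiorEmb n c') := by ring

lemma gauss_real (m : ℕ) : ∑ i ∈ Finset.range m, ((i:ℝ)+1) = m*(m+1)/2 := by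
  induction m with
  | zero => simp
  | succ k ih => rw [Finset.sum_range_succ, ih]; push_cast; ring

theorem A_G2_ones_identity
    (n : ℕ) (hn : 2 ≤ n) (A : Matrix (Fin (n+1)) (Fin (n+1)) ℝ)
    (hsym : A.IsSymm)
    (h1 : A *ᵥ onesVec n = 0)
    (hx : A *ᵥ gridVec n = eR n - eL n)
    (hinv : IsUnit (centralBlock n A).det) :
    A *ᵥ (G2 n A *ᵥ onesVec n) =
      onesVec n - (((n : ℝ) + 1)/2) • eL n - (((n : ℝ) + 1)/2) • eR n ∧
    ((n : ℝ) + 1)⁻¹ • (A *ᵥ (G2 n A *ᵥ onesVec n)) + (1/2 : ℝ) • (A *ᵥ gridVec n) =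
      ((n : ℝ) + 1)⁻¹ • onesVec n - eL n := by
  have hnR : (0:ℝ) < n := by positivity
  have hnne : (n:ℝ) ≠ 0 := ne_of_gt hnR
  set B := centralBlock n A with hBdef
  have hBinv : B * B⁻¹ = 1 := Matrix.mul_nonsing_inv B hinv
  have hAsym : ∀ i j, A i j = A j i := fun i j => hsym.apply j i
  set w : Fin (n-1) → ℝ := B⁻¹ *ᵥ (fun _ => (1:ℝ)) with hwdef
  have hw : ∀ c : Fin (n-1), ∑ j, B c j * w j = 1 := by
    intro c
    have h : B *ᵥ w = fun _ => (1:ℝ) := by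
      rw [hwdef, Matrix.mulVec_mulVec, hBinv, Matrix.one_mulVec]
    have := congrFun h c
    simpa [Matrix.mulVec, dotProduct] using this
  have hBsym : ∀ c j, B c j = B j c := fun c j => hAsym _ _
  -- the vector u = G2 *ᵥ ones
  have hu0 : ∀ j : Fin (n+1), ¬(0 < j.1 ∧ j.1 < n) → (G2 n A *ᵥ onesVec n) j = 0 := by
    intro j hj
    show ∑ k, G2 n A j k * onesVec n k = 0
    apply Finset.sum_eq_zero
    intro k _
    simp only [G2, pad, dif_neg hj, zero_mul]
  have huI : ∀ j' : Fin (n-1), (G2 n A *ᵥ onesVec n) (interiorEmb n j') = w j' := by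
    intro j'
    have hj : 0 < (interiorEmb n j').1 ∧ (interiorEmb n j').1 < n := by
      have := j'.isLt; simp [interiorEmb]; omega
    show ∑ k, G2 n A (interiorEmb n j') k * onesVec n k = w j'
    rw [sum_interior n _ (by
      intro k hk
      simp only [G2, pad, dif_neg hk, dite_eq_ite, ite_self, zero_mul])]
    have hterm : ∀ k' : Fin (n-1),
        G2 n A (interiorEmb n j') (interiorEmb n k') * onesVec n (interiorEmb n k')
          = B⁻¹ j' k' := by
      intro k'
      have hk' : 0 < (interiorEmb n k').1 ∧ (interiorEmb n k').1 < n := by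
        have := k'.isLt; simp [interiorEmb]; omega
      simp only [G2, pad, dif_pos hj, dif_pos hk', onesVec, mul_one]
      have e1 : (⟨(interiorEmb n j').1 - 1, by omega⟩ : Fin (n-1)) = j' :=
        Fin.ext (by simp [interiorEmb])
      have e2 : (⟨(interiorEmb n k').1 - 1, by omega⟩ : Fin (n-1)) = k' :=
        Fin.ext (by simp [interiorEmb])
      rw [e1, e2]
    rw [Finset.sum_congr rfl (fun k' _ => hterm k')]
    show _ = ∑ k', B⁻¹ j' k' * (1:ℝ)
    simp
  have hAu : ∀ i : Fin (n+1), (A *ᵥ (G2 n A *ᵥ onesVec n)) i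
      = ∑ j' : Fin (n-1), A i (interiorEmb n j') * w j' := by
    intro i
    show ∑ j, A i j * (G2 n A *ᵥ onesVec n) j = _
    rw [sum_interior n _ (by
      intro j hj
      rw [hu0 j hj, mul_zero])]
    exact Finset.sum_congr rfl (fun j' _ => by rw [huI j'])
  -- interior values
  have hint : ∀ c : Fin (n-1), (A *ᵥ (G2 n A *ᵥ onesVec n)) (interiorEmb n c) = 1 := by
    intro c
    rw [hAu]
    exact hw c
  -- row identities for interior rows
  have hrow1 : ∀ j' : Fin (n-1), ∑ c, A (interiorEmb n j') c = 0 := by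
    intro j'
    have := congrFun h1 (interiorEmb n j')
    simpa [Matrix.mulVec, dotProduct, onesVec] using this
  have hrow2 : ∀ j' : Fin (n-1), ∑ c, A (interiorEmb n j') c * (c.1 : ℝ) = 0 := by
    intro j'
    have h := congrFun hx (interiorEmb n j')
    have hne0 : (interiorEmb n j').1 ≠ 0 := by simp [interiorEmb]
    have hnen : (interiorEmb n j').1 ≠ n := by have := j'.isLt; simp [interiorEmb]; omega
    have hr : (eR n - eL n) (interiorEmb n j') = 0 := by
      simp [eR, eL, hne0, hnen]
    rw [hr] at h
    have h' : ∑ c, A (interiorEmb n j') c * ((c.1:ℝ) / n) = 0 := by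
      simpa [Matrix.mulVec, dotProduct, gridVec] using h
    have h'' : (∑ c, A (interiorEmb n j') c * (c.1:ℝ)) / n = 0 := by
      rw [Finset.sum_div]
      rw [← h']
      exact Finset.sum_congr rfl (fun c _ => by ring)
    field_simp at h''
    simpa using h''
  -- boundary column values of interior rows
  have hcast : ∀ c' : Fin (n-1), ((interiorEmb n c').1 : ℝ) = (c'.1 : ℝ) + 1 := by
    intro c'; simp [interiorEmb]
  have hAn : ∀ j' : Fin (n-1), A (interiorEmb n j') ⟨n, by omega⟩
      = -(1/n) * ∑ c' : Fin (n-1), A (interiorEmb n j') (interiorEmb n c') * ((c'.1:ℝ) + 1) := by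
    intro j'
    have h := hrow2 j'
    rw [sum_split n hn (fun c => A (interiorEmb n j') c * (c.1:ℝ))] at h
    simp only [Fin.val_mk, Nat.cast_zero, mul_zero, zero_add] at h
    have h2 : A (interiorEmb n j') ⟨n, by omega⟩ * (n:ℝ)
        + ∑ c' : Fin (n-1), A (interiorEmb n j') (interiorEmb n c') * ((c'.1:ℝ) + 1) = 0 := by
      rw [← h]
      congr 1
      exact Finset.sum_congr rfl (fun c' _ => by rw [hcast])
    have hfield : -((1:ℝ)/n) * ∑ c' : Fin (n-1), A (interiorEmb n j') (interiorEmb n c') * ((c'.1:ℝ) + 1)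
        = -(∑ c' : Fin (n-1), A (interiorEmb n j') (interiorEmb n c') * ((c'.1:ℝ) + 1)) / n := by
      ring
    rw [hfield, eq_div_iff hnne]
    linarith [h2]
  have hA0 : ∀ j' : Fin (n-1), A (interiorEmb n j') ⟨0, by omega⟩
      = (1/n) * ∑ c' : Fin (n-1), A (interiorEmb n j') (interiorEmb n c') * ((c'.1:ℝ) + 1 - n) := by
    intro j'
    have h := hrow1 j'
    rw [sum_split n hn (fun c => A (interiorEmb n j') c)] at h
    have h2 := hAn j'
    rw [h2] at h
    have hS : ∑ c' : Fin (n-1), A (interiorEmb n j') (interiorEmb n c') * ((c'.1:ℝ) + 1 - n)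
        = (∑ c' : Fin (n-1), A (interiorEmb n j') (interiorEmb n c') * ((c'.1:ℝ) + 1))
          - n * ∑ c' : Fin (n-1), A (interiorEmb n j') (interiorEmb n c') := by
      rw [Finset.mul_sum, ← Finset.sum_sub_distrib]
      exact Finset.sum_congr rfl (fun c' _ => by ring)
    rw [hS]
    have hfield : (1:ℝ)/n * ((∑ c' : Fin (n-1), A (interiorEmb n j') (interiorEmb n c') * ((c'.1:ℝ) + 1))
          - n * ∑ c' : Fin (n-1), A (interiorEmb n j') (interiorEmb n c'))
        = (1/n) * (∑ c' : Fin (n-1), A (interiorEmb n j') (interiorEmb n c') * ((c'.1:ℝ) + 1))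
          - ∑ c' : Fin (n-1), A (interiorEmb n j') (interiorEmb n c') := by
      field_simp
    rw [hfield]
    linarith [h]
  -- Gauss sum
  have hGauss : ∑ c' : Fin (n-1), ((c'.1:ℝ) + 1) = ((n:ℝ) - 1) * n / 2 := by
    rw [Fin.sum_univ_eq_sum_range (fun i => (i:ℝ) + 1) (n-1), gauss_real]
    have : ((n-1 : ℕ) : ℝ) = (n:ℝ) - 1 := by
      push_cast [Nat.cast_sub (by omega : 1 ≤ n)]; ring
    rw [this]; ring
  -- the inner symmetric sum
  have hinner : ∀ c' : Fin (n-1),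
      ∑ j' : Fin (n-1), A (interiorEmb n j') (interiorEmb n c') * w j' = 1 := by
    intro c'
    rw [← hw c']
    exact Finset.sum_congr rfl (fun j' _ => by rw [hBsym c' j']; rfl)
  -- boundary values
  have hbd0 : (A *ᵥ (G2 n A *ᵥ onesVec n)) ⟨0, by omega⟩ = -((n:ℝ) - 1)/2 := by
    rw [hAu]
    have : ∀ j' : Fin (n-1), A ⟨0, by omega⟩ (interiorEmb n j') * w j'
        = (1/n) * ∑ c' : Fin (n-1),
            (A (interiorEmb n j') (interiorEmb n c') * w j') * ((c'.1:ℝ) + 1 - n) := by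
      intro j'
      rw [hAsym, hA0 j', Finset.mul_sum, Finset.mul_sum]
      rw [Finset.sum_mul]
      exact Finset.sum_congr rfl (fun c' _ => by ring)
    rw [Finset.sum_congr rfl (fun j' _ => this j'), ← Finset.mul_sum]
    rw [Finset.sum_comm]
    have hc : ∀ c' : Fin (n-1),
        ∑ j' : Fin (n-1), (A (interiorEmb n j') (interiorEmb n c') * w j') * ((c'.1:ℝ) + 1 - n)
        = ((c'.1:ℝ) + 1 - n) := by
      intro c'
      rw [← Finset.sum_mul, hinner c', one_mul]
    rw [Finset.sum_congr rfl (fun c' _ => hc c')]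
    have : ∑ c' : Fin (n-1), ((c'.1:ℝ) + 1 - n)
        = (((n:ℝ) - 1) * n / 2) - ((n:ℝ) - 1) * n := by
      rw [← hGauss]
      have hcard : (Finset.univ : Finset (Fin (n-1))).card = n - 1 := by simp
      rw [Finset.sum_sub_distrib, Finset.sum_const, hcard]
      have : ((n-1 : ℕ) : ℝ) = (n:ℝ) - 1 := by
        push_cast [Nat.cast_sub (by omega : 1 ≤ n)]; ring
      rw [nsmul_eq_mul, this]
      try ring
    rw [this]
    field_simp
    try ring
  have hbdn : (A *ᵥ (G2 n A *ᵥ onesVec n)) ⟨n, by omega⟩ = -((n:ℝ) - 1)/2 := by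
    rw [hAu]
    have : ∀ j' : Fin (n-1), A ⟨n, by omega⟩ (interiorEmb n j') * w j'
        = -(1/n) * ∑ c' : Fin (n-1),
            (A (interiorEmb n j') (interiorEmb n c') * w j') * ((c'.1:ℝ) + 1) := by
      intro j'
      rw [hAsym, hAn j', Finset.mul_sum, Finset.mul_sum]
      rw [Finset.sum_mul]
      exact Finset.sum_congr rfl (fun c' _ => by ring)
    rw [Finset.sum_congr rfl (fun j' _ => this j'), ← Finset.mul_sum]
    rw [Finset.sum_comm]
    have hc : ∀ c' : Fin (n-1),
        ∑ j' : Fin (n-1), (A (interiorEmb n j') (interiorEmb n c') * w j') * ((c'.1:ℝ) + 1)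
        = ((c'.1:ℝ) + 1) := by
      intro c'
      rw [← Finset.sum_mul, hinner c', one_mul]
    rw [Finset.sum_congr rfl (fun c' _ => hc c'), hGauss]
    field_simp
    try ring
  -- part 1
  have part1 : A *ᵥ (G2 n A *ᵥ onesVec n) =
      onesVec n - (((n : ℝ) + 1)/2) • eL n - (((n : ℝ) + 1)/2) • eR n := by
    funext i
    by_cases hi0 : i.1 = 0
    · have hieq : i = ⟨0, by omega⟩ := Fin.ext hi0
      rw [hieq, hbd0]
      simp only [Pi.sub_apply, Pi.smul_apply, onesVec, eL, eR, smul_eq_mul]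
      norm_num [show ¬((0:ℕ) = n) by omega]
      ring
    · by_cases hin : i.1 = n
      · have hieq : i = ⟨n, by omega⟩ := Fin.ext hin
        rw [hieq, hbdn]
        simp only [Pi.sub_apply, Pi.smul_apply, onesVec, eL, eR, smul_eq_mul]
        norm_num [show ¬(n = 0) by omega]
        ring
      · have hi : 0 < i.1 ∧ i.1 < n := by have := i.isLt; omega
        have hieq : i = interiorEmb n ⟨i.1 - 1, by omega⟩ := by
          refine Fin.ext ?_; simp [interiorEmb]; omega
        rw [hieq, hint]
        simp only [Pi.sub_apply, Pi.smul_apply, onesVec, eL, eR, smul_eq_mul]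
        have e1 : (interiorEmb n ⟨i.1 - 1, by omega⟩).1 ≠ 0 := by simp [interiorEmb]
        have e2 : (interiorEmb n ⟨i.1 - 1, by omega⟩).1 ≠ n := by simp [interiorEmb]; omega
        rw [if_neg e1, if_neg e2]
        ring
  refine ⟨part1, ?_⟩
  rw [part1, hx]
  funext i
  have hn1 : (n:ℝ) + 1 ≠ 0 := by positivity
  simp only [Pi.add_apply, Pi.sub_apply, Pi.smul_apply, smul_eq_mul, onesVec, eL, eR]
  by_cases hi0 : i.1 = 0
  · simp only [hi0]
    norm_num [show ¬((0:ℕ) = n) by omega]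
    field_simp
    ring
  · by_cases hin : i.1 = n
    · simp only [hin]
      norm_num [show ¬(n = 0) by omega, if_neg hi0]
      field_simp
      ring
    · rw [if_neg hi0, if_neg hin]
      ring
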